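/- For reals a ≥ 0 and b ≥ 1, the sum over j from 0 to ⌊a⌋ of (6/(a+b+6)) · ((j+5)/(a+b+5))^5 · exp(-j·b/(a+b)) is at most e times the integral from 0 to a of (6/(a+b+6)) · ((x+5)/(a+b+5))^5 · exp(-x·b/(a+b)) dx, plus the j = 0 term. -/

import Mathlib

open MeasureTheory Finset

/-- sum-to-integral comparison for the probability sum. -/
theorem stmt_4 (a b : ℝ) (ha : 0 ≤ a) (hb : 1 ≤ b) (φ : ℝ → ℝ)
    (hφ : ∀ x, φ x = 6 / (a + b + 6) * ((x + 5) / (a + b + 5)) ^ 5 *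
      Real.exp (-x * b / (a + b))) :
    ∑ j ∈ Finset.range (⌊a⌋₊ + 1), φ (j : ℝ) ≤
      Real.exp 1 * (∫ x in (0:ℝ)..a, φ x) + φ 0 := by
  have hφ' : φ = fun x => 6 / (a + b + 6) * ((x + 5) / (a + b + 5)) ^ 5 *
      Real.exp (-x * b / (a + b)) := funext hφ
  subst hφ'
  set c := a + b with hc
  have hc1 : 1 ≤ c := by linarith
  have hcont : Continuous fun x : ℝ => 6 / (c + 6) * ((x + 5) / (c + 5)) ^ 5 *
      Real.exp (-x * b / c) := by fun_prop
  set φ := fun x : ℝ => 6 / (c + 6) * ((x + 5) / (c + 5)) ^ 5 * Real.exp (-x * b / c) with hφdef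
  have hφnn : ∀ x : ℝ, 0 ≤ x → 0 ≤ φ x := by
    intro x hx
    have : (0:ℝ) ≤ ((x + 5) / (c + 5)) ^ 5 :=
      pow_nonneg (div_nonneg (by linarith) (by linarith)) 5
    have h6 : (0:ℝ) ≤ 6 / (c + 6) := by positivity
    exact mul_nonneg (mul_nonneg h6 this) (Real.exp_nonneg _)
  -- key pointwise bound
  have key : ∀ (i : ℕ) (x : ℝ), (i:ℝ) ≤ x → x ≤ (i:ℝ) + 1 →
      φ ((i:ℝ) + 1) ≤ Real.exp 1 * φ x := by
    intro i x hxl hxu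
    have hi0 : (0:ℝ) ≤ (i:ℝ) := Nat.cast_nonneg i
    have hx5 : (5:ℝ) ≤ x + 5 := by linarith
    have h1 : ((i:ℝ) + 1 + 5) ≤ (x + 5) * Real.exp 5⁻¹ := by
      have ht : (x+5)⁻¹ + 1 ≤ Real.exp ((x+5)⁻¹) := Real.add_one_le_exp _
      have hxp : (0:ℝ) < x + 5 := by linarith
      calc (i:ℝ) + 1 + 5 ≤ x + 6 := by linarith
        _ = (x + 5) * ((x+5)⁻¹ + 1) := by field_simp; ring
        _ ≤ (x + 5) * Real.exp ((x+5)⁻¹) := by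
            exact mul_le_mul_of_nonneg_left ht (le_of_lt hxp)
        _ ≤ (x + 5) * Real.exp 5⁻¹ := by
            have h55 : (x+5)⁻¹ ≤ 5⁻¹ := by
              apply inv_anti₀ <;> linarith
            gcongr
    have hexp : Real.exp (-((i:ℝ)+1) * b / c) ≤ Real.exp (-x * b / c) := by
      apply Real.exp_le_exp.mpr
      have hb0 : (0:ℝ) ≤ b := by linarith
      have hc0 : (0:ℝ) < c := by linarith
      have hnum : -((i:ℝ)+1) * b ≤ -x * b := by nlinarith
      rw [div_eq_mul_inv, div_eq_mul_inv]
      exact mul_le_mul_of_nonneg_right hnum (inv_nonneg.mpr hc0.le)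
    have hpow : (((i:ℝ)+1 + 5) / (c + 5)) ^ 5 ≤ ((x + 5) * Real.exp 5⁻¹ / (c + 5)) ^ 5 := by
      gcongr
    have h6 : (0:ℝ) ≤ 6 / (c + 6) := by positivity
    have e15 : (Real.exp 5⁻¹) ^ 5 = Real.exp 1 := by
      rw [← Real.exp_nat_mul]; norm_num
    calc φ ((i:ℝ) + 1) = 6 / (c + 6) * (((i:ℝ)+1+5)/(c+5))^5 * Real.exp (-((i:ℝ)+1) * b / c) := rfl
      _ ≤ 6 / (c + 6) * (((x+5) * Real.exp 5⁻¹/(c+5))^5) * Real.exp (-x * b / c) := by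
          apply mul_le_mul (mul_le_mul_of_nonneg_left hpow h6) hexp (Real.exp_nonneg _)
          positivity
      _ = Real.exp 1 * φ x := by
          rw [hφdef]
          simp only
          rw [div_pow, div_pow, mul_pow, e15]
          ring
  have hgcont : Continuous fun x : ℝ => Real.exp 1 * φ x := continuous_const.mul hcont
  set g : ℝ → ℝ := fun x => Real.exp 1 * φ x with hg
  have hgint : ∀ u v : ℝ, IntervalIntegrable g volume u v :=
    fun u v => hgcont.intervalIntegrable u v
  have step1 : ∀ i : ℕ, φ ((i:ℝ)+1) ≤ ∫ x in (i:ℝ)..((i:ℝ)+1), g x := by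
    intro i
    have hle : (i:ℝ) ≤ (i:ℝ)+1 := by linarith
    have h0 : φ ((i:ℝ)+1) = ∫ _x in (i:ℝ)..((i:ℝ)+1), φ ((i:ℝ)+1) := by
      rw [intervalIntegral.integral_const]; simp
    rw [h0]
    apply intervalIntegral.integral_mono_on hle intervalIntegrable_const (hgint _ _)
    intro x hx
    exact key i x hx.1 hx.2
  have hNa : (⌊a⌋₊ : ℝ) ≤ a := Nat.floor_le ha
  have step2 : ∑ i ∈ Finset.range ⌊a⌋₊, ∫ x in (i:ℝ)..((i:ℝ)+1), g x
      = ∫ x in (0:ℝ)..(⌊a⌋₊:ℝ), g x := by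
    have := intervalIntegral.sum_integral_adjacent_intervals
      (a := fun k : ℕ => (k:ℝ)) (f := g) (n := ⌊a⌋₊) (fun k _ => hgint _ _)
    simpa using this
  have step3 : ∫ x in (0:ℝ)..(⌊a⌋₊:ℝ), g x ≤ ∫ x in (0:ℝ)..a, g x := by
    rw [← intervalIntegral.integral_add_adjacent_intervals (hgint 0 (⌊a⌋₊:ℝ)) (hgint _ a)]
    have h2 : 0 ≤ ∫ x in ((⌊a⌋₊:ℝ))..a, g x := by
      apply intervalIntegral.integral_nonneg hNa
      intro x hx
      exact mul_nonneg (Real.exp_nonneg 1) (hφnn x (le_trans (Nat.cast_nonneg _) hx.1))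
    linarith
  have step4 : ∫ x in (0:ℝ)..a, g x = Real.exp 1 * ∫ x in (0:ℝ)..a, φ x :=
    intervalIntegral.integral_const_mul _ _
  have main : ∑ i ∈ Finset.range ⌊a⌋₊, φ ((i:ℝ)+1) ≤ Real.exp 1 * ∫ x in (0:ℝ)..a, φ x := by
    calc ∑ i ∈ Finset.range ⌊a⌋₊, φ ((i:ℝ)+1)
        ≤ ∑ i ∈ Finset.range ⌊a⌋₊, ∫ x in (i:ℝ)..((i:ℝ)+1), g x :=
          Finset.sum_le_sum (fun i _ => step1 i)
      _ = ∫ x in (0:ℝ)..(⌊a⌋₊:ℝ), g x := step2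
      _ ≤ ∫ x in (0:ℝ)..a, g x := step3
      _ = _ := step4
  rw [Finset.sum_range_succ']
  push_cast
  linarith [main]
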